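/- arXiv:1604.07240 — 2 statements merged into one kernel-verified Lean document; each statement's English description precedes it below -/
import Mathlib

section
/- If (s_j)_{j=0}^{κ+1} is a first-term dominant sequence of complex p×q matrices and (t_j)_{j=0}^{κ} is its first α-Schur transform, then (s_j)_{j=0}^{κ+1} is exactly the inverse α-Schur transform corresponding to [(t_j)_{j=0}^{κ}, s_0]. More generally, without the dominance hypothesis the inverse transform (w_j) of [(t_j), s_0] satisfies w_j = s_0 s_0^{+} s_j s_0^{+} s_0 for all 0 ≤ j ≤ κ+1. -/
open Matrix BigOperators

def IsMP {m n : Type*} [Fintype m] [Fintype n] (A : Matrix m n ℂ) (B : Matrix n m ℂ) : Prop :=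
  A * B * A = A ∧ B * A * B = B ∧ (A * B)ᴴ = A * B ∧ (B * A)ᴴ = B * A

open Classical in
noncomputable def mp {m n : Type*} [Fintype m] [Fintype n] (A : Matrix m n ℂ) : Matrix n m ℂ :=
  if h : ∃ B, IsMP A B then h.choose else 0

lemma star_dot_self_eq_zero {m : Type*} [Fintype m] {v : m → ℂ} (h : dotProduct (star v) v = 0) :
    v = 0 := by
  have h2 : ∑ j, (Complex.normSq (v j) : ℂ) = 0 := by
    rw [← h]; simp [dotProduct, Complex.normSq_eq_conj_mul_self]
  have h3 : ∑ j, Complex.normSq (v j) = 0 := by exact_mod_cast h2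
  have h4 : ∀ j, Complex.normSq (v j) = 0 := by
    intro j
    have := Finset.sum_eq_zero_iff_of_nonneg (fun i _ => Complex.normSq_nonneg (v i)) |>.1 h3
    exact this j (Finset.mem_univ j)
  funext j
  exact Complex.normSq_eq_zero.mp (h4 j)

lemma ker_aux {m n : Type*} [Fintype m] [Fintype n] (A : Matrix m n ℂ) (x : n → ℂ)
    (h : (Aᴴ * A) *ᵥ x = 0) : A *ᵥ x = 0 := by
  apply star_dot_self_eq_zero (v := A *ᵥ x)
  rw [star_mulVec, ← dotProduct_mulVec, mulVec_mulVec, h, dotProduct_zero]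

lemma mul_eq_zero_of_gram {m n k : Type*} [Fintype m] [Fintype n] [Fintype k]
    (A : Matrix m n ℂ) (X : Matrix n k ℂ) (h : (Aᴴ * A) * X = 0) : A * X = 0 := by
  ext i j
  have h1 : (Aᴴ * A) *ᵥ (fun i' => X i' j) = 0 := by
    funext i'
    have := congrFun (congrFun h i') j
    simpa [Matrix.mulVec, Matrix.mul_apply, dotProduct] using this
  have h3 := congrFun (ker_aux A _ h1) i
  simpa [Matrix.mulVec, dotProduct, Matrix.mul_apply] using h3

theorem exists_isMP {m n : Type*} [Fintype m] [Fintype n] (A : Matrix m n ℂ) :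
    ∃ B, IsMP A B := by
  classical
  have hH : (Aᴴ * A).IsHermitian := isHermitian_conjTranspose_mul_self A
  obtain ⟨U, hU⟩ : ∃ U', U' = (hH.eigenvectorUnitary : Matrix n n ℂ) := ⟨_, rfl⟩
  obtain ⟨d, hd⟩ : ∃ x, x = (RCLike.ofReal ∘ hH.eigenvalues : n → ℂ) := ⟨_, rfl⟩
  obtain ⟨g, hg⟩ : ∃ x, x = (fun i => if hH.eigenvalues i = 0 then 0
    else ((hH.eigenvalues i)⁻¹ : ℝ) : n → ℂ) := ⟨_, rfl⟩
  have hUU : star U * U = 1 := by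
    rw [hU]; exact Unitary.coe_star_mul_self hH.eigenvectorUnitary
  have hspec : Aᴴ * A = U * diagonal d * star U := by
    rw [hU, hd]; exact hH.spectral_theorem
  have hconj : ∀ f f' : n → ℂ,
      (U * diagonal f * star U) * (U * diagonal f' * star U) = U * diagonal (f * f') * star U := by
    intro f f'
    calc (U * diagonal f * star U) * (U * diagonal f' * star U)
        = U * diagonal f * ((star U * U) * (diagonal f' * star U)) := by
          simp only [Matrix.mul_assoc]
      _ = U * diagonal (f * f') * star U := by
          rw [hUU, Matrix.one_mul, Matrix.mul_assoc U, ← Matrix.mul_assoc (diagonal f),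
            diagonal_mul_diagonal, ← Matrix.mul_assoc]
          rfl
  have hdg' : ∀ i, d i * g i = if hH.eigenvalues i = 0 then 0 else 1 := by
    intro i
    simp only [hd, hg, Function.comp_apply]
    by_cases h : hH.eigenvalues i = 0
    · simp [h]
    · rw [if_neg h,
        show (RCLike.ofReal (hH.eigenvalues i) : ℂ) = Complex.ofReal (hH.eigenvalues i) from rfl,
        ← Complex.ofReal_mul, mul_inv_cancel₀ h, Complex.ofReal_one]
      exact (if_neg h).symm
  have hgd : g * d = d * g := mul_comm g d
  obtain ⟨S, hS⟩ : ∃ S', S' = U * diagonal g * star U := ⟨_, rfl⟩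
  have hBS : (Aᴴ * A) * S = U * diagonal (d * g) * star U := by rw [hspec, hS, hconj]
  have hSB : S * (Aᴴ * A) = U * diagonal (d * g) * star U := by rw [hspec, hS, hconj, hgd]
  have hcomm : S * (Aᴴ * A) = (Aᴴ * A) * S := by rw [hBS, hSB]
  have hdgd : d * g * d = d := by
    funext i
    simp only [Pi.mul_apply, hdg']
    by_cases h : hH.eigenvalues i = 0
    · simp [hd, h]
    · simp [h]
  have hdgg : d * g * g = g := by
    funext i
    simp only [Pi.mul_apply, hdg']
    by_cases h : hH.eigenvalues i = 0
    · simp [hg, h]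
    · simp [h]
  have hdgf : d * g = fun i => if hH.eigenvalues i = 0 then 0 else 1 := funext hdg'
  have hBSB : Aᴴ * A * S * (Aᴴ * A) = Aᴴ * A := by
    rw [hBS, hspec, hconj, hdgd]
  have hSBS : S * (Aᴴ * A) * S = S := by
    rw [hSB, hS, hconj, hdgg]
  have hgstar : star g = g := by
    funext i
    by_cases h : hH.eigenvalues i = 0 <;> simp [hg, h]
  have hSH : Sᴴ = S := by
    rw [hS]
    simp only [Matrix.star_eq_conjTranspose]
    rw [Matrix.conjTranspose_mul, Matrix.conjTranspose_mul, conjTranspose_conjTranspose,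
      diagonal_conjTranspose, hgstar, ← Matrix.mul_assoc]
  have hkey : A * (S * (Aᴴ * A)) = A := by
    have hz : (Aᴴ * A) * (1 - S * (Aᴴ * A)) = 0 := by
      rw [Matrix.mul_sub, Matrix.mul_one, ← Matrix.mul_assoc, hBSB, sub_self]
    have h0 := mul_eq_zero_of_gram A _ hz
    rw [Matrix.mul_sub, Matrix.mul_one, sub_eq_zero] at h0
    exact h0.symm
  refine ⟨S * Aᴴ, ?_, ?_, ?_, ?_⟩
  · calc A * (S * Aᴴ) * A = A * (S * (Aᴴ * A)) := by simp only [Matrix.mul_assoc]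
      _ = A := hkey
  · calc S * Aᴴ * A * (S * Aᴴ) = (S * (Aᴴ * A) * S) * Aᴴ := by simp only [Matrix.mul_assoc]
      _ = S * Aᴴ := by rw [hSBS]
  · rw [← Matrix.mul_assoc, Matrix.conjTranspose_mul, Matrix.conjTranspose_mul,
      conjTranspose_conjTranspose, hSH, Matrix.mul_assoc]
  · calc ((S * Aᴴ) * A)ᴴ = (Aᴴ * A)ᴴ * Sᴴ := by
          rw [Matrix.mul_assoc, Matrix.conjTranspose_mul]
      _ = (Aᴴ * A) * S := by rw [hSH, (isHermitian_conjTranspose_mul_self A).eq]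
      _ = S * (Aᴴ * A) := hcomm.symm
      _ = S * Aᴴ * A := by rw [Matrix.mul_assoc]

theorem mp_spec {m n : Type*} [Fintype m] [Fintype n] (A : Matrix m n ℂ) : IsMP A (mp A) := by
  have h := exists_isMP A
  rw [mp, dif_pos h]
  exact h.choose_spec

noncomputable def recip {p q : ℕ} (s : ℕ → Matrix (Fin p) (Fin q) ℂ) :
    ℕ → Matrix (Fin q) (Fin p) ℂ
  | 0 => mp (s 0)
  | (j+1) => -(mp (s 0) * ∑ l : Fin (j+1), s (j+1 - l.val) * recip s l.val)
termination_by j => j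
decreasing_by exact l.isLt

noncomputable def shiftA {p q : ℕ} (α : ℂ) (s : ℕ → Matrix (Fin p) (Fin q) ℂ) :
    ℕ → Matrix (Fin p) (Fin q) ℂ
  | 0 => s 0
  | (j+1) => (-α) • s j + s (j+1)

noncomputable def recipA {p q : ℕ} (α : ℂ) (s : ℕ → Matrix (Fin p) (Fin q) ℂ) :
    ℕ → Matrix (Fin q) (Fin p) ℂ :=
  recip (shiftA α s)

/-- the first α-Schur transform. -/
noncomputable def schur1 {p q : ℕ} (α : ℂ) (s : ℕ → Matrix (Fin p) (Fin q) ℂ) :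
    ℕ → Matrix (Fin p) (Fin q) ℂ :=
  fun j => s 0 * (-(recipA α s (j + 1))) * s 0

/-- the inverse α-Schur transform corresponding to [(t_j), A]. -/
noncomputable def invT {p q : ℕ} (α : ℂ) (t : ℕ → Matrix (Fin p) (Fin q) ℂ)
    (A : Matrix (Fin p) (Fin q) ℂ) : ℕ → Matrix (Fin p) (Fin q) ℂ
  | 0 => A
  | (j+1) => α ^ (j + 1) • A + ∑ l : Fin (j + 1), α ^ (j - l.val) •
      (A * mp A * ∑ k : Fin (l.val + 1),
        t (l.val - k.val) * mp A *
          ((-α) • (if k.val = 0 then 0 else invT α t A (k.val - 1)) + invT α t A k.val))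
termination_by j => j
decreasing_by
  · have hk := k.isLt; have hl := l.isLt; omega
  · have hk := k.isLt; have hl := l.isLt; omega

/-- first-term dominance of a matrix sequence up to κ. -/
def FTD {a b : ℕ} (κ : ℕ∞) (t : ℕ → Matrix (Fin a) (Fin b) ℂ) : Prop :=
  ∀ j : ℕ, (j : ℕ∞) ≤ κ →
    LinearMap.ker (Matrix.mulVecLin (t 0)) ≤ LinearMap.ker (Matrix.mulVecLin (t j)) ∧
    LinearMap.range (Matrix.mulVecLin (t j)) ≤ LinearMap.range (Matrix.mulVecLin (t 0))

lemma tri {M : Type*} [AddCommMonoid M] (F : ℕ → ℕ → M) :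
    ∀ m, ∑ k ∈ Finset.range m, ∑ i ∈ Finset.range (m - k), F i k
      = ∑ n ∈ Finset.range m, ∑ k ∈ Finset.range (n+1), F (n-k) k := by
  intro m
  induction m with
  | zero => simp
  | succ m ih =>
    rw [Finset.sum_range_succ, Finset.sum_range_succ]
    have h1 : ∑ k ∈ Finset.range m, ∑ i ∈ Finset.range (m+1-k), F i k
        = (∑ k ∈ Finset.range m, ∑ i ∈ Finset.range (m-k), F i k)
          + ∑ k ∈ Finset.range m, F (m-k) k := by
      rw [← Finset.sum_add_distrib]
      refine Finset.sum_congr rfl fun k hk => ?_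
      have hk' := Finset.mem_range.mp hk
      have h : m + 1 - k = (m - k) + 1 := by omega
      rw [h, Finset.sum_range_succ]
    have h2 : ∑ i ∈ Finset.range (m+1-m), F i m = F 0 m := by
      have h : m + 1 - m = 1 := by omega
      rw [h, Finset.sum_range_one]
    have h3 : ∑ k ∈ Finset.range (m+1), F (m-k) k
        = (∑ k ∈ Finset.range m, F (m-k) k) + F 0 m := by
      rw [Finset.sum_range_succ, Nat.sub_self]
    rw [h1, h2, ih, h3]
    abel

lemma recip_succ {p q : ℕ} (u : ℕ → Matrix (Fin p) (Fin q) ℂ) (j : ℕ) :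
    recip u (j+1) = -(mp (u 0) * ∑ l ∈ Finset.range (j+1), u (j+1-l) * recip u l) := by
  rw [recip, Fin.sum_univ_eq_sum_range (fun l => u (j+1-l) * recip u l) (j+1)]

lemma p1X {a b c : Type*} [Fintype a] [Fintype b] [Fintype c]
    (A : Matrix a b ℂ) (X : Matrix b c ℂ) : A * (mp A * (A * X)) = A * X := by
  rw [← Matrix.mul_assoc, ← Matrix.mul_assoc, (mp_spec A).1]

lemma p2X {a b c : Type*} [Fintype a] [Fintype b] [Fintype c]
    (A : Matrix a b ℂ) (X : Matrix a c ℂ) : mp A * (A * (mp A * X)) = mp A * X := by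
  rw [← Matrix.mul_assoc, ← Matrix.mul_assoc, (mp_spec A).2.1]

lemma recip_mul_P {p q : ℕ} (u : ℕ → Matrix (Fin p) (Fin q) ℂ) :
    ∀ m, recip u m * (u 0 * mp (u 0)) = recip u m := by
  intro m
  induction m using Nat.strong_induction_on with
  | _ m ih =>
    match m with
    | 0 =>
      rw [recip, ← Matrix.mul_assoc, (mp_spec (u 0)).2.1]
    | (j+1) =>
      rw [recip_succ, Matrix.neg_mul, neg_inj, Matrix.mul_assoc (mp (u 0))]
      congr 1
      rw [Matrix.sum_mul]
      refine Finset.sum_congr rfl fun l hl => ?_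
      rw [Matrix.mul_assoc, ih l (Finset.mem_range.mp hl)]

lemma rPX {p q c : ℕ} (u : ℕ → Matrix (Fin p) (Fin q) ℂ) (m : ℕ)
    (X : Matrix (Fin p) (Fin c) ℂ) :
    recip u m * (u 0 * (mp (u 0) * X)) = recip u m * X := by
  rw [← Matrix.mul_assoc, ← Matrix.mul_assoc, Matrix.mul_assoc (recip u m), recip_mul_P]

lemma convQ {p q : ℕ} (u : ℕ → Matrix (Fin p) (Fin q) ℂ) :
    ∀ l, (∑ k ∈ Finset.range (l+1), recip u (l+1-k) * (u k * (mp (u 0) * u 0)))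
      = -(mp (u 0) * (u (l+1) * (mp (u 0) * u 0))) := by
  intro l
  induction l using Nat.strong_induction_on with
  | _ l ih =>
    have step1 : ∀ k ∈ Finset.range (l+1),
        recip u (l+1-k) * (u k * (mp (u 0) * u 0))
          = -(mp (u 0) * ∑ i ∈ Finset.range (l+1-k),
              u (l+1-k-i) * (recip u i * (u k * (mp (u 0) * u 0)))) := by
      intro k hk
      have hk' := Finset.mem_range.mp hk
      have h : l + 1 - k = (l - k) + 1 := by omega
      rw [h, recip_succ, Matrix.neg_mul, neg_inj, Matrix.mul_assoc, Matrix.sum_mul]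
      congr 1
      exact Finset.sum_congr rfl fun i _ => Matrix.mul_assoc _ _ _
    rw [Finset.sum_congr rfl step1]
    rw [Finset.sum_neg_distrib, ← Matrix.mul_sum, neg_inj]
    congr 1
    rw [tri (fun i k => u (l+1-k-i) * (recip u i * (u k * (mp (u 0) * u 0)))) (l+1)]
    have step2 : ∀ n ∈ Finset.range (l+1),
        (∑ k ∈ Finset.range (n+1), u (l+1-k-(n-k)) * (recip u (n-k) * (u k * (mp (u 0) * u 0))))
          = u (l+1-n) * ∑ k ∈ Finset.range (n+1), recip u (n-k) * (u k * (mp (u 0) * u 0)) := by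
      intro n hn
      have hn' := Finset.mem_range.mp hn
      rw [Matrix.mul_sum]
      refine Finset.sum_congr rfl fun k hk => ?_
      have hk' := Finset.mem_range.mp hk
      have h : l + 1 - k - (n - k) = l + 1 - n := by omega
      rw [h]
    rw [Finset.sum_congr rfl step2, Finset.sum_range_succ']
    have hzero : ∀ n ∈ Finset.range l,
        u (l+1-(n+1)) * ∑ k ∈ Finset.range (n+1+1), recip u (n+1-k) * (u k * (mp (u 0) * u 0))
          = 0 := by
      intro n hn
      have hn' := Finset.mem_range.mp hn
      rw [Finset.sum_range_succ, ih n hn', Nat.sub_self, recip, neg_add_cancel, Matrix.mul_zero]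
    rw [Finset.sum_congr rfl hzero, Finset.sum_const_zero, zero_add, Nat.sub_zero,
      Finset.sum_range_one, Nat.sub_zero, recip, p2X]

lemma ext_mulVec {a b : ℕ} {M N : Matrix (Fin a) (Fin b) ℂ}
    (h : ∀ x, M *ᵥ x = N *ᵥ x) : M = N := by
  ext i j
  have := congrFun (h (Pi.single j 1)) i
  simpa [Matrix.mulVec_single] using this

/-- Proposition 10.10 / Lemma 10.9: a first-term dominant sequence is recovered
    from its first α-Schur transform and its first matrix; in general the inverse
    transform of [(t_j), s_0] gives s_0 s_0^+ s_j s_0^+ s_0. -/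
theorem stmt18 {p q : ℕ} (α : ℂ) (κ : ℕ∞)
    (s : ℕ → Matrix (Fin p) (Fin q) ℂ) :
    (FTD (κ + 1) s → ∀ j : ℕ, (j : ℕ∞) ≤ κ + 1 →
      invT α (schur1 α s) (s 0) j = s j) ∧
    (∀ j : ℕ, (j : ℕ∞) ≤ κ + 1 →
      invT α (schur1 α s) (s 0) j = s 0 * mp (s 0) * s j * mp (s 0) * s 0) := by
  have hu0 : shiftA α s 0 = s 0 := rfl
  have hbase : s 0 * (mp (s 0) * (s 0 * (mp (s 0) * s 0))) = s 0 := by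
    rw [p1X, ← Matrix.mul_assoc, (mp_spec (s 0)).1]
  have key : ∀ j, invT α (schur1 α s) (s 0) j
      = s 0 * (mp (s 0) * (s j * (mp (s 0) * s 0))) := by
    intro j
    induction j using Nat.strong_induction_on with
    | _ j ih =>
      match j with
      | 0 => rw [invT, hbase]
      | (j+1) =>
        rw [invT]
        rw [Fin.sum_univ_eq_sum_range (fun l => α ^ (j - l) •
          (s 0 * mp (s 0) * ∑ k : Fin (l + 1),
            schur1 α s (l - k.val) * mp (s 0) *
              ((-α) • (if k.val = 0 then 0 else invT α (schur1 α s) (s 0) (k.val - 1))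
                + invT α (schur1 α s) (s 0) k.val))) (j+1)]
        have hST : ∀ k, k < j + 1 →
            ((-α) • (if k = 0 then 0 else invT α (schur1 α s) (s 0) (k - 1))
              + invT α (schur1 α s) (s 0) k)
            = s 0 * (mp (s 0) * (shiftA α s k * (mp (s 0) * s 0))) := by
          intro k hk
          match k with
          | 0 =>
            rw [if_pos rfl, smul_zero, zero_add, invT, hu0, hbase]
          | (k'+1) =>
            rw [if_neg (by omega), Nat.add_sub_cancel, ih k' (by omega), ih (k'+1) (by omega),
              show shiftA α s (k'+1) = (-α) • s k' + s (k'+1) from rfl]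
            simp only [Matrix.add_mul, Matrix.mul_add, Matrix.smul_mul, Matrix.mul_smul]
        have hterm : ∀ l ∈ Finset.range (j+1),
            α ^ (j - l) • (s 0 * mp (s 0) * ∑ k : Fin (l + 1),
              schur1 α s (l - k.val) * mp (s 0) *
                ((-α) • (if k.val = 0 then 0 else invT α (schur1 α s) (s 0) (k.val - 1))
                  + invT α (schur1 α s) (s 0) k.val))
            = α ^ (j - l) • (s 0 * (mp (s 0) * (shiftA α s (l+1) * (mp (s 0) * s 0)))) := by
          intro l hl
          have hl' := Finset.mem_range.mp hl
          congr 1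
          rw [Fin.sum_univ_eq_sum_range (fun k => schur1 α s (l - k) * mp (s 0) *
            ((-α) • (if k = 0 then 0 else invT α (schur1 α s) (s 0) (k - 1))
              + invT α (schur1 α s) (s 0) k)) (l+1)]
          have hk1 : ∀ k ∈ Finset.range (l+1),
              schur1 α s (l - k) * mp (s 0) *
                ((-α) • (if k = 0 then 0 else invT α (schur1 α s) (s 0) (k - 1))
                  + invT α (schur1 α s) (s 0) k)
              = -(s 0 * (recip (shiftA α s) (l+1-k)
                  * (shiftA α s k * (mp (s 0) * s 0)))) := by
            intro k hk
            have hk' := Finset.mem_range.mp hk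
            have hidx : l + 1 - k = l - k + 1 := by omega
            rw [hidx, hST k (by omega)]
            simp only [schur1, recipA]
            have hr := rPX (shiftA α s) (l - k + 1) (shiftA α s k * (mp (s 0) * s 0))
            rw [hu0] at hr
            simp only [Matrix.neg_mul, Matrix.mul_neg, Matrix.mul_assoc]
            rw [p1X, hr]
          rw [Finset.sum_congr rfl hk1, Finset.sum_neg_distrib, ← Matrix.mul_sum]
          have hconv := convQ (shiftA α s) l
          rw [hu0] at hconv
          rw [hconv]
          simp only [Matrix.mul_neg, neg_neg]
          rw [Matrix.mul_assoc, p1X]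
        rw [Finset.sum_congr rfl hterm]
        have htel : ∀ l ∈ Finset.range (j+1),
            α ^ (j - l) • (s 0 * (mp (s 0) * (shiftA α s (l+1) * (mp (s 0) * s 0))))
            = (fun i => α ^ (j + 1 - i) • (s 0 * (mp (s 0) * (s i * (mp (s 0) * s 0))))) (l+1)
              - (fun i => α ^ (j + 1 - i) • (s 0 * (mp (s 0) * (s i * (mp (s 0) * s 0))))) l := by
          intro l hl
          have hl' := Finset.mem_range.mp hl
          simp only
          have e1 : j + 1 - (l+1) = j - l := by omega
          have e2 : j + 1 - l = (j - l) + 1 := by omega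
          rw [e1, e2, show shiftA α s (l+1) = (-α) • s l + s (l+1) from rfl]
          simp only [Matrix.add_mul, Matrix.mul_add, Matrix.smul_mul, Matrix.mul_smul, smul_add,
            smul_smul]
          rw [mul_neg, ← pow_succ, neg_smul, neg_add_eq_sub]
        rw [Finset.sum_congr rfl htel, Finset.sum_range_sub
          (fun i => α ^ (j + 1 - i) • (s 0 * (mp (s 0) * (s i * (mp (s 0) * s 0)))))]
        simp only [Nat.sub_self, Nat.sub_zero, pow_zero, one_smul]
        rw [hbase]
        abel
  constructor
  · intro hF j hj
    rw [key j]
    obtain ⟨hker, hran⟩ := hF j hj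
    have hQ : s j * (mp (s 0) * s 0) = s j := by
      apply ext_mulVec
      intro x
      have h1 : (x - (mp (s 0) * s 0) *ᵥ x) ∈ LinearMap.ker (Matrix.mulVecLin (s 0)) := by
        rw [LinearMap.mem_ker, Matrix.mulVecLin_apply, Matrix.mulVec_sub, Matrix.mulVec_mulVec,
          ← Matrix.mul_assoc, (mp_spec (s 0)).1, sub_self]
      have h2 := hker h1
      rw [LinearMap.mem_ker, Matrix.mulVecLin_apply, Matrix.mulVec_sub, sub_eq_zero] at h2
      rw [← Matrix.mulVec_mulVec, ← h2]
    have hP : s 0 * (mp (s 0) * s j) = s j := by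
      apply ext_mulVec
      intro x
      have h1 : s j *ᵥ x ∈ LinearMap.range (Matrix.mulVecLin (s j)) :=
        ⟨x, Matrix.mulVecLin_apply _ _⟩
      obtain ⟨y, hy⟩ := hran h1
      rw [Matrix.mulVecLin_apply] at hy
      calc (s 0 * (mp (s 0) * s j)) *ᵥ x = s 0 *ᵥ (mp (s 0) *ᵥ (s j *ᵥ x)) := by
            rw [Matrix.mulVec_mulVec, Matrix.mulVec_mulVec, Matrix.mul_assoc]
        _ = (s 0 * mp (s 0) * s 0) *ᵥ y := by
            rw [← hy, Matrix.mulVec_mulVec, Matrix.mulVec_mulVec]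
        _ = s 0 *ᵥ y := by rw [(mp_spec (s 0)).1]
        _ = s j *ᵥ x := hy
    rw [hQ, hP]
  · intro j hj
    rw [key j]
    simp only [Matrix.mul_assoc]
end

section
/- If α ∈ ℝ, (t_j)_{j=0}^{κ} is an α-Stieltjes right-nonnegative definite sequence of q×q matrices, and A is a nonnegative Hermitian q×q matrix, then the inverse α-Schur transform (s_j)_{j=0}^{κ+1} corresponding to [(t_j), A] is α-Stieltjes right-nonnegative definite, i.e., belongs to K^{≥}_{q,κ+1,α}. -/
open Matrix BigOperators ComplexOrder

section MPfacts
variable {q : ℕ}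

lemma isMP_unique {A B C : Matrix (Fin q) (Fin q) ℂ} (hB : IsMP A B) (hC : IsMP A C) :
    B = C := by
  obtain ⟨b1, b2, b3, b4⟩ := hB
  obtain ⟨c1, c2, c3, c4⟩ := hC
  have hAB_AC : A * B = A * C := by
    calc A * B = (A * B)ᴴ := b3.symm
    _ = ((A * C * A) * B)ᴴ := by rw [c1]
    _ = ((A * C) * (A * B))ᴴ := by rw [show A * C * A * B = (A * C) * (A * B) by noncomm_ring]
    _ = (A * B)ᴴ * (A * C)ᴴ := conjTranspose_mul _ _
    _ = (A * B) * (A * C) := by rw [b3, c3]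
    _ = (A * B * A) * C := by noncomm_ring
    _ = A * C := by rw [b1]
  have hBA_CA : B * A = C * A := by
    calc B * A = (B * A)ᴴ := b4.symm
    _ = (B * (A * C * A))ᴴ := by rw [c1]
    _ = ((B * A) * (C * A))ᴴ := by rw [show B * (A * C * A) = (B * A) * (C * A) by noncomm_ring]
    _ = (C * A)ᴴ * (B * A)ᴴ := conjTranspose_mul _ _
    _ = (C * A) * (B * A) := by rw [b4, c4]
    _ = C * (A * B * A) := by noncomm_ring
    _ = C * A := by rw [b1]
  calc B = B * A * B := b2.symm
  _ = C * A * B := by rw [hBA_CA]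
  _ = C * (A * C) := by rw [mul_assoc, hAB_AC]
  _ = C := by rw [← mul_assoc, c2]

lemma exists_isMP_s19 {A : Matrix (Fin q) (Fin q) ℂ} (hA : A.IsHermitian) :
    ∃ B, IsMP A B := by
  classical
  set U : Matrix (Fin q) (Fin q) ℂ := (hA.eigenvectorUnitary : Matrix (Fin q) (Fin q) ℂ) with hU
  have hUU' : Uᴴ * U = 1 := by
    simpa [hU, star_eq_conjTranspose] using (Matrix.mem_unitaryGroup_iff').mp hA.eigenvectorUnitary.2
  set d : Fin q → ℂ := RCLike.ofReal ∘ hA.eigenvalues with hd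
  have hAeq : A = U * diagonal d * Uᴴ := by
    exact hA.spectral_theorem
  set d' : Fin q → ℂ := fun i => if d i = 0 then 0 else (d i)⁻¹ with hd'
  have key : ∀ e f : Fin q → ℂ,
      (U * diagonal e * Uᴴ) * (U * diagonal f * Uᴴ) = U * diagonal (fun i => e i * f i) * Uᴴ := by
    intro e f
    rw [show U * diagonal e * Uᴴ * (U * diagonal f * Uᴴ)
      = U * (diagonal e * (Uᴴ * U) * diagonal f) * Uᴴ by noncomm_ring]
    rw [hUU', mul_one, diagonal_mul_diagonal]
  have hdd'd : (fun i => (d i * d' i) * d i) = d := by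
    funext i
    simp only [hd']
    by_cases h : d i = 0
    · simp [h]
    · rw [if_neg h]
      field_simp
  have hd'dd' : (fun i => (d' i * d i) * d' i) = d' := by
    funext i
    simp only [hd']
    by_cases h : d i = 0
    · simp [h]
    · simp only [if_neg h]
      field_simp
  have hone : ∀ i, d i ≠ 0 → d i * d' i = 1 := by
    intro i h
    simp only [hd', if_neg h]
    field_simp
  have hstar_dd' : ∀ i, star (d i * d' i) = d i * d' i := by
    intro i
    by_cases h : d i = 0
    · simp [hd', h]
    · rw [hone i h]; simp
  have herm : ∀ e : Fin q → ℂ, (∀ i, star (e i) = e i) →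
      (U * diagonal e * Uᴴ)ᴴ = U * diagonal e * Uᴴ := by
    intro e he
    calc (U * diagonal e * Uᴴ)ᴴ = U * (diagonal e)ᴴ * Uᴴ := by
          simp only [conjTranspose_mul, conjTranspose_conjTranspose]; noncomm_ring
    _ = U * diagonal e * Uᴴ := by
          rw [diagonal_conjTranspose, show (star e) = e from funext he]
  refine ⟨U * diagonal d' * Uᴴ, ?_, ?_, ?_, ?_⟩
  · rw [hAeq, key, key, hdd'd]
  · rw [hAeq, key, key, hd'dd']
  · rw [hAeq, key]
    exact herm _ hstar_dd'
  · rw [hAeq, key]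
    refine herm _ (fun i => ?_)
    rw [mul_comm (d' i) (d i)]
    exact hstar_dd' i

lemma mp_isMP {A : Matrix (Fin q) (Fin q) ℂ} (hA : A.IsHermitian) : IsMP A (mp A) := by
  classical
  rw [mp, dif_pos (exists_isMP_s19 hA)]
  exact (exists_isMP_s19 hA).choose_spec

lemma mp_conjTranspose {A : Matrix (Fin q) (Fin q) ℂ} (hA : A.IsHermitian) :
    (mp A)ᴴ = mp A := by
  obtain ⟨h1, h2, h3, h4⟩ := mp_isMP hA
  have hH : Aᴴ = A := hA
  refine isMP_unique (A := A) ⟨?_, ?_, ?_, ?_⟩ (mp_isMP hA)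
  · have e1 : (A * (mp A)ᴴ * A)ᴴ = A := by
      simp only [conjTranspose_mul, conjTranspose_conjTranspose, hH]
      rw [← mul_assoc, h1]
    rw [← conjTranspose_conjTranspose (A * (mp A)ᴴ * A), e1, hH]
  · have e2 : ((mp A)ᴴ * A * (mp A)ᴴ)ᴴ = mp A := by
      simp only [conjTranspose_mul, conjTranspose_conjTranspose, hH]
      rw [← mul_assoc, h2]
    rw [← conjTranspose_conjTranspose ((mp A)ᴴ * A * (mp A)ᴴ), e2]
  · calc (A * (mp A)ᴴ)ᴴ = mp A * Aᴴ := by simp [conjTranspose_mul]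
    _ = mp A * A := by rw [hH]
    _ = (mp A * A)ᴴ := h4.symm
    _ = Aᴴ * (mp A)ᴴ := conjTranspose_mul _ _
    _ = A * (mp A)ᴴ := by rw [hH]
  · calc ((mp A)ᴴ * A)ᴴ = Aᴴ * mp A := by simp [conjTranspose_mul]
    _ = A * mp A := by rw [hH]
    _ = (A * mp A)ᴴ := h3.symm
    _ = (mp A)ᴴ * Aᴴ := conjTranspose_mul _ _
    _ = (mp A)ᴴ * A := by rw [hH]

end MPfacts


section Seq
open Finset
variable {q : ℕ} (α : ℂ) (t : ℕ → Matrix (Fin q) (Fin q) ℂ) (A : Matrix (Fin q) (Fin q) ℂ)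

/-- v_k = A⁺ u_k where u = shiftA. -/
noncomputable def vS (k : ℕ) : Matrix (Fin q) (Fin q) ℂ := mp A * shiftA α (invT α t A) k

/-- w_k = A⁺ s_k. -/
noncomputable def wS (k : ℕ) : Matrix (Fin q) (Fin q) ℂ := mp A * invT α t A k

/-- q_j = Σ_{k≤j} t_{j-k} v_k. -/
noncomputable def qS (j : ℕ) : Matrix (Fin q) (Fin q) ℂ :=
  ∑ k ∈ range (j+1), t (j-k) * vS α t A k

/-- r_m = -α t_m + t_{m+1}. -/
noncomputable def rS (m : ℕ) : Matrix (Fin q) (Fin q) ℂ := (-α) • t m + t (m+1)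

/-- Q_b = Σ_{j<b} t_{b-1-j} w_j. -/
noncomputable def QS (b : ℕ) : Matrix (Fin q) (Fin q) ℂ :=
  ∑ j ∈ range b, t (b-1-j) * wS α t A j

lemma invT_zero : invT α t A 0 = A := by rw [invT]

lemma shiftA_ite (k : ℕ) :
    (-α) • (if k = 0 then 0 else invT α t A (k-1)) + invT α t A k
      = shiftA α (invT α t A) k := by
  cases k with
  | zero => simp [shiftA, invT_zero]
  | succ k => simp [shiftA]

lemma invT_closed (j : ℕ) : invT α t A (j+1) = α ^ (j + 1) • A +
    ∑ l ∈ range (j + 1), α ^ (j - l) •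
      (A * mp A * ∑ k ∈ range (l + 1),
        t (l - k) * (mp A * shiftA α (invT α t A) k)) := by
  rw [invT]
  congr 1
  rw [← Fin.sum_univ_eq_sum_range]
  refine Finset.sum_congr rfl fun l _ => ?_
  congr 2
  rw [← Fin.sum_univ_eq_sum_range]
  refine Finset.sum_congr rfl fun k _ => ?_
  rw [mul_assoc, shiftA_ite]

lemma invT_succ (j : ℕ) : invT α t A (j+1)
    = α • invT α t A j + A * mp A * qS α t A j := by
  induction j with
  | zero =>
      rw [invT_closed]
      simp [qS, invT_zero, vS]
  | succ j _ =>
      rw [invT_closed α t A (j+1), invT_closed α t A j, Finset.sum_range_succ,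
        Nat.sub_self, pow_zero, one_smul]
      rw [smul_add, smul_smul, ← pow_succ', Finset.smul_sum]
      have hcg : ∀ l ∈ range (j+1), α • (α ^ (j - l) •
          (A * mp A * ∑ k ∈ range (l + 1),
            t (l - k) * (mp A * shiftA α (invT α t A) k)))
          = α ^ (j + 1 - l) •
          (A * mp A * ∑ k ∈ range (l + 1),
            t (l - k) * (mp A * shiftA α (invT α t A) k)) := by
        intro l hl
        rw [smul_smul, ← pow_succ']
        congr 2
        simp only [Finset.mem_range] at hl
        omega
      rw [Finset.sum_congr rfl hcg]
      have hq : A * mp A * qS α t A (j+1)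
          = A * mp A * ∑ k ∈ range (j + 2), t (j + 1 - k) * (mp A * shiftA α (invT α t A) k) := by
        simp only [qS, vS]
      rw [hq]
      abel

lemma uRec (j : ℕ) : shiftA α (invT α t A) (j+1) = A * mp A * qS α t A j := by
  have : shiftA α (invT α t A) (j+1) = (-α) • invT α t A j + invT α t A (j+1) := rfl
  rw [this, invT_succ, ← add_assoc, ← add_smul, neg_add_cancel, zero_smul, zero_add]

end Seq


section SeqFacts
open Finset
variable {q : ℕ} (α : ℂ) (t : ℕ → Matrix (Fin q) (Fin q) ℂ) {A : Matrix (Fin q) (Fin q) ℂ}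
  (hA : A.PosSemidef)
include hA

lemma mp_comm : A * mp A = mp A * A := by
  obtain ⟨h1, h2, h3, h4⟩ := mp_isMP hA.1
  calc A * mp A = (A * mp A)ᴴ := h3.symm
  _ = (mp A)ᴴ * Aᴴ := conjTranspose_mul _ _
  _ = mp A * A := by rw [mp_conjTranspose hA.1, hA.1.eq]

lemma fPP : (A * mp A) * (A * mp A) = A * mp A := by
  obtain ⟨h1, _, _, _⟩ := mp_isMP hA.1
  calc (A * mp A) * (A * mp A) = (A * mp A * A) * mp A := by noncomm_ring
  _ = A * mp A := by rw [h1]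

lemma fPu (k : ℕ) : (A * mp A) * shiftA α (invT α t A) k = shiftA α (invT α t A) k := by
  cases k with
  | zero =>
      have h : shiftA α (invT α t A) 0 = A := invT_zero α t A
      rw [h, (mp_isMP hA.1).1]
  | succ k => rw [uRec, ← mul_assoc, fPP hA]

lemma fPs (k : ℕ) : (A * mp A) * invT α t A k = invT α t A k := by
  induction k with
  | zero => rw [invT_zero, (mp_isMP hA.1).1]
  | succ k ih =>
      rw [invT_succ, mul_add, mul_smul_comm, ih, ← mul_assoc, fPP hA]

lemma fPw (k : ℕ) : (A * mp A) * wS α t A k = wS α t A k := by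
  show (A * mp A) * (mp A * invT α t A k) = mp A * invT α t A k
  rw [← mul_assoc, mp_comm hA, (mp_isMP hA.1).2.1]

lemma fAv (k : ℕ) : A * vS α t A k = shiftA α (invT α t A) k := by
  show A * (mp A * shiftA α (invT α t A) k) = _
  rw [← mul_assoc, fPu α t hA]

lemma fAw (k : ℕ) : A * wS α t A k = invT α t A k := by
  show A * (mp A * invT α t A k) = _
  rw [← mul_assoc, fPs α t hA]

omit hA in
lemma fv0 : vS α t A 0 = mp A * A := by
  show mp A * shiftA α (invT α t A) 0 = mp A * A
  show mp A * invT α t A 0 = mp A * A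
  rw [invT_zero]

omit hA in
lemma fw0 : wS α t A 0 = mp A * A := by
  show mp A * invT α t A 0 = mp A * A
  rw [invT_zero]

lemma fv0H : (vS α t A 0)ᴴ = A * mp A := by
  rw [fv0, conjTranspose_mul, mp_conjTranspose hA.1, hA.1.eq]

lemma fw0H : (wS α t A 0)ᴴ = A * mp A := by
  rw [fw0, conjTranspose_mul, mp_conjTranspose hA.1, hA.1.eq]

lemma fvsucc (j : ℕ) : vS α t A (j+1) = mp A * qS α t A j := by
  show mp A * shiftA α (invT α t A) (j+1) = _
  rw [uRec, ← mul_assoc, ← mul_assoc, (mp_isMP hA.1).2.1]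

lemma fwsucc (j : ℕ) : wS α t A (j+1) = α • wS α t A j + mp A * qS α t A j := by
  show mp A * invT α t A (j+1) = _
  rw [invT_succ, mul_add, mul_smul_comm, ← mul_assoc, ← mul_assoc, (mp_isMP hA.1).2.1]
  rfl

lemma fwH (k : ℕ) : (wS α t A k)ᴴ = (invT α t A k)ᴴ * mp A := by
  show (mp A * invT α t A k)ᴴ = _
  rw [conjTranspose_mul, mp_conjTranspose hA.1]

lemma fQsucc (b : ℕ) : QS α t A (b+1) = α • QS α t A b + qS α t A b := by
  have e0 : wS α t A 0 = vS α t A 0 := by rw [fv0, fw0]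
  have h1 : QS α t A (b+1)
      = (∑ j ∈ range b, t (b - (j+1)) * wS α t A (j+1)) + t b * wS α t A 0 := by
    show (∑ j ∈ range (b+1), t (b - j) * wS α t A j) = _
    rw [Finset.sum_range_succ']
    simp
  have h2 : qS α t A b
      = (∑ k ∈ range b, t (b - (k+1)) * vS α t A (k+1)) + t b * vS α t A 0 := by
    show (∑ k ∈ range (b+1), t (b - k) * vS α t A k) = _
    rw [Finset.sum_range_succ']
    simp
  have h3 : ∀ j ∈ range b, t (b - (j+1)) * wS α t A (j+1)
      = α • (t (b-1-j) * wS α t A j) + t (b - (j+1)) * vS α t A (j+1) := by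
    intro j hj
    have e : b - (j+1) = b - 1 - j := by omega
    rw [fwsucc α t hA, ← fvsucc α t hA, mul_add, mul_smul_comm, e]
  rw [h1, Finset.sum_congr rfl h3, Finset.sum_add_distrib, ← Finset.smul_sum, h2, e0]
  rw [show (∑ j ∈ range b, t (b-1-j) * wS α t A j) = QS α t A b from rfl]
  abel

lemma fH1 (b : ℕ) : ∑ j ∈ range b, rS α t (b-1-j) * wS α t A j
    = qS α t A b - t 0 * wS α t A b := by
  have h1 : ∀ j ∈ range b, rS α t (b-1-j) * wS α t A j
      = (-α) • (t (b-1-j) * wS α t A j) + t (b - j) * wS α t A j := by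
    intro j hj
    simp only [Finset.mem_range] at hj
    have e : b - 1 - j + 1 = b - j := by omega
    rw [rS, add_mul, smul_mul_assoc, e]
  have h3' : (∑ j ∈ range (b+1), t (b - j) * wS α t A j)
      = (∑ j ∈ range b, t (b - j) * wS α t A j) + t (b - b) * wS α t A b :=
    Finset.sum_range_succ _ _
  rw [Nat.sub_self] at h3'
  have h4 : (∑ j ∈ range (b+1), t (b - j) * wS α t A j) = QS α t A (b+1) := rfl
  rw [h4, fQsucc α t hA] at h3'
  have h5 : (∑ j ∈ range b, t (b - j) * wS α t A j)
      = α • QS α t A b + qS α t A b - t 0 * wS α t A b := by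
    rw [h3']
    abel
  rw [Finset.sum_congr rfl h1, Finset.sum_add_distrib, ← Finset.smul_sum, h5]
  rw [show (∑ j ∈ range b, t (b-1-j) * wS α t A j) = QS α t A b from rfl, neg_smul]
  abel

end SeqFacts


section MainIds
open Finset
variable {q : ℕ} (α : ℂ) (t : ℕ → Matrix (Fin q) (Fin q) ℂ) {A : Matrix (Fin q) (Fin q) ℂ}

lemma keyO (hA : A.PosSemidef) (a b : ℕ) (hh : ∀ m, m ≤ a → (t m)ᴴ = t m) :
    ∑ j ∈ range (b+1), (vS α t A (a+1))ᴴ * t (b-j) * vS α t A j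
      = ∑ i ∈ range (a+1), (vS α t A i)ᴴ * t (a-i) * vS α t A (b+1) := by
  have hv : (vS α t A (a+1))ᴴ = ∑ k ∈ range (a+1), (vS α t A k)ᴴ * t (a-k) * mp A := by
    rw [fvsucc α t hA, conjTranspose_mul, mp_conjTranspose hA.1]
    have hq : (qS α t A a)ᴴ = ∑ k ∈ range (a+1), (vS α t A k)ᴴ * t (a-k) := by
      rw [qS, conjTranspose_sum]
      refine Finset.sum_congr rfl fun k hk => ?_
      rw [conjTranspose_mul, hh (a-k) (by omega)]
    rw [hq, Finset.sum_mul]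
  calc ∑ j ∈ range (b+1), (vS α t A (a+1))ᴴ * t (b-j) * vS α t A j
      = (vS α t A (a+1))ᴴ * qS α t A b := by
        rw [qS, Finset.mul_sum]
        exact Finset.sum_congr rfl fun j _ => (mul_assoc _ _ _)
  _ = ∑ k ∈ range (a+1), (vS α t A k)ᴴ * t (a-k) * (mp A * qS α t A b) := by
        rw [hv, Finset.sum_mul]
        exact Finset.sum_congr rfl fun k _ => (mul_assoc _ _ _)
  _ = ∑ i ∈ range (a+1), (vS α t A i)ᴴ * t (a-i) * vS α t A (b+1) := by
        rw [← fvsucc α t hA]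

lemma idO (hA : A.PosSemidef) : ∀ a b, (∀ m, m ≤ a → (t m)ᴴ = t m) →
    shiftA α (invT α t A) (a+b+1)
      = ∑ i ∈ range (a+1), ∑ j ∈ range (b+1),
          (vS α t A i)ᴴ * t (a+b-i-j) * vS α t A j := by
  intro a
  induction a with
  | zero =>
      intro b _
      simp only [Nat.zero_add, Finset.sum_range_one, Nat.sub_zero]
      simp only [fv0H α t hA]
      rw [uRec, qS, Finset.mul_sum]
      exact Finset.sum_congr rfl fun j _ => (mul_assoc _ _ _).symm
  | succ a ih =>
      intro b hh
      rw [show a+1+b+1 = a+(b+1)+1 from by omega, ih (b+1) (fun m hm => hh m (by omega))]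
      have eL : ∑ i ∈ range (a+1), ∑ j ∈ range (b+1+1),
            (vS α t A i)ᴴ * t (a+(b+1)-i-j) * vS α t A j
          = (∑ i ∈ range (a+1), ∑ j ∈ range (b+1),
              (vS α t A i)ᴴ * t (a+1+b-i-j) * vS α t A j)
            + ∑ i ∈ range (a+1), (vS α t A i)ᴴ * t (a-i) * vS α t A (b+1) := by
        rw [← Finset.sum_add_distrib]
        refine Finset.sum_congr rfl fun i hi => ?_
        simp only [Finset.mem_range] at hi
        rw [Finset.sum_range_succ]
        congr 1
        · refine Finset.sum_congr rfl fun j hj => ?_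
          simp only [Finset.mem_range] at hj
          rw [show a+(b+1)-i-j = a+1+b-i-j from by omega]
        · rw [show a+(b+1)-i-(b+1) = a-i from by omega]
      have eR : ∑ i ∈ range (a+1+1), ∑ j ∈ range (b+1),
            (vS α t A i)ᴴ * t (a+1+b-i-j) * vS α t A j
          = (∑ i ∈ range (a+1), ∑ j ∈ range (b+1),
              (vS α t A i)ᴴ * t (a+1+b-i-j) * vS α t A j)
            + ∑ j ∈ range (b+1), (vS α t A (a+1))ᴴ * t (b-j) * vS α t A j := by
        rw [Finset.sum_range_succ]
        congr 1
        refine Finset.sum_congr rfl fun j hj => ?_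
        simp only [Finset.mem_range] at hj
        rw [show a+1+b-(a+1)-j = b-j from by omega]
      rw [eL, eR, keyO α t hA a b (fun m hm => hh m (by omega))]

lemma keyE (hA : A.PosSemidef) (hα : (starRingEnd ℂ) α = α) (a b : ℕ)
    (hh : ∀ m, m ≤ a + 1 → (t m)ᴴ = t m) :
    (wS α t A (a+1))ᴴ * A * wS α t A b
        + ∑ j ∈ range b, (wS α t A a)ᴴ * rS α t (b-1-j) * wS α t A j
      = (wS α t A a)ᴴ * A * wS α t A (b+1)
        + ∑ i ∈ range a, (wS α t A i)ᴴ * rS α t (a-1-i) * wS α t A b := by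
  obtain ⟨m1, m2, m3, m4⟩ := mp_isMP hA.1
  have hα' : star α = α := hα
  have g1 : ∀ x y : ℕ, (wS α t A x)ᴴ * A * wS α t A y = (invT α t A x)ᴴ * wS α t A y := by
    intro x y
    rw [fwH α t hA, mul_assoc, mul_assoc]
    congr 1
    show mp A * (A * (mp A * invT α t A y)) = _
    rw [← mul_assoc, ← mul_assoc, m2]
    rfl
  have hsucc : (invT α t A (a+1))ᴴ
      = α • (invT α t A a)ᴴ + (qS α t A a)ᴴ * (A * mp A) := by
    rw [invT_succ, conjTranspose_add, conjTranspose_smul, hα', conjTranspose_mul, m3]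
  have hrH : ∀ m, m + 1 ≤ a + 1 → (rS α t m)ᴴ = rS α t m := by
    intro m hm
    rw [rS, conjTranspose_add, conjTranspose_smul, star_neg, hα', hh m (by omega), hh (m+1) hm]
  have e1 : (wS α t A (a+1))ᴴ * A * wS α t A b
      = α • ((invT α t A a)ᴴ * wS α t A b) + (qS α t A a)ᴴ * wS α t A b := by
    rw [g1, hsucc, add_mul, smul_mul_assoc, mul_assoc, fPw α t hA]
  have e2 : ∑ j ∈ range b, (wS α t A a)ᴴ * rS α t (b-1-j) * wS α t A j
      = (wS α t A a)ᴴ * qS α t A b - (wS α t A a)ᴴ * (t 0 * wS α t A b) := by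
    have h0 : ∑ j ∈ range b, (wS α t A a)ᴴ * rS α t (b-1-j) * wS α t A j
        = (wS α t A a)ᴴ * ∑ j ∈ range b, rS α t (b-1-j) * wS α t A j := by
      rw [Finset.mul_sum]
      exact Finset.sum_congr rfl fun j _ => mul_assoc _ _ _
    rw [h0, fH1 α t hA, mul_sub]
  have e3 : (wS α t A a)ᴴ * A * wS α t A (b+1)
      = α • ((invT α t A a)ᴴ * wS α t A b) + (wS α t A a)ᴴ * qS α t A b := by
    rw [g1, fwsucc α t hA, mul_add, mul_smul_comm, ← mul_assoc, ← fwH α t hA]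
  have e4 : ∑ i ∈ range a, (wS α t A i)ᴴ * rS α t (a-1-i) * wS α t A b
      = (qS α t A a)ᴴ * wS α t A b - (wS α t A a)ᴴ * (t 0 * wS α t A b) := by
    have h6 : ∑ i ∈ range a, (wS α t A i)ᴴ * rS α t (a-1-i)
        = (∑ i ∈ range a, rS α t (a-1-i) * wS α t A i)ᴴ := by
      rw [conjTranspose_sum]
      refine Finset.sum_congr rfl fun i hi => ?_
      simp only [Finset.mem_range] at hi
      rw [conjTranspose_mul, hrH (a-1-i) (by omega)]
    have h5 : ∑ i ∈ range a, (wS α t A i)ᴴ * rS α t (a-1-i)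
        = (qS α t A a)ᴴ - (wS α t A a)ᴴ * t 0 := by
      rw [h6, fH1 α t hA, conjTranspose_sub, conjTranspose_mul, hh 0 (by omega)]
    calc ∑ i ∈ range a, (wS α t A i)ᴴ * rS α t (a-1-i) * wS α t A b
        = (∑ i ∈ range a, (wS α t A i)ᴴ * rS α t (a-1-i)) * wS α t A b :=
          (Finset.sum_mul _ _ _).symm
    _ = _ := by rw [h5, sub_mul, mul_assoc]
  rw [e1, e2, e3, e4]
  abel

lemma idE (hA : A.PosSemidef) (hα : (starRingEnd ℂ) α = α) :
    ∀ a b, (∀ m, m ≤ a → (t m)ᴴ = t m) →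
    invT α t A (a+b) = (wS α t A a)ᴴ * A * wS α t A b
      + ∑ i ∈ range a, ∑ j ∈ range b,
          (wS α t A i)ᴴ * rS α t (a+b-2-i-j) * wS α t A j := by
  intro a
  induction a with
  | zero =>
      intro b _
      simp only [Nat.zero_add, Finset.range_zero, Finset.sum_empty, add_zero]
      rw [fw0H α t hA, (mp_isMP hA.1).1, fAw α t hA]
  | succ a ih =>
      intro b hh
      conv_lhs => rw [show a+1+b = a+(b+1) from by omega]
      rw [ih (b+1) (fun m hm => hh m (by omega))]
      have eL : ∑ i ∈ range a, ∑ j ∈ range (b+1),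
            (wS α t A i)ᴴ * rS α t (a+(b+1)-2-i-j) * wS α t A j
          = (∑ i ∈ range a, ∑ j ∈ range b,
              (wS α t A i)ᴴ * rS α t (a+1+b-2-i-j) * wS α t A j)
            + ∑ i ∈ range a, (wS α t A i)ᴴ * rS α t (a-1-i) * wS α t A b := by
        rw [← Finset.sum_add_distrib]
        refine Finset.sum_congr rfl fun i hi => ?_
        simp only [Finset.mem_range] at hi
        rw [Finset.sum_range_succ]
        congr 1
        · refine Finset.sum_congr rfl fun j hj => ?_
          simp only [Finset.mem_range] at hj
          rw [show a+(b+1)-2-i-j = a+1+b-2-i-j from by omega]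
        · rw [show a+(b+1)-2-i-b = a-1-i from by omega]
      have eR : ∑ i ∈ range (a+1), ∑ j ∈ range b,
            (wS α t A i)ᴴ * rS α t (a+1+b-2-i-j) * wS α t A j
          = (∑ i ∈ range a, ∑ j ∈ range b,
              (wS α t A i)ᴴ * rS α t (a+1+b-2-i-j) * wS α t A j)
            + ∑ j ∈ range b, (wS α t A a)ᴴ * rS α t (b-1-j) * wS α t A j := by
        rw [Finset.sum_range_succ]
        congr 1
        refine Finset.sum_congr rfl fun j hj => ?_
        simp only [Finset.mem_range] at hj
        rw [show a+1+b-2-a-j = b-1-j from by omega]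
      rw [eL, eR]
      have hkey := keyE α t hA hα a b hh
      set X := (wS α t A a)ᴴ * A * wS α t A (b+1) with hX
      set Z := (wS α t A (a+1))ᴴ * A * wS α t A b with hZ
      set C := ∑ i ∈ range a, ∑ j ∈ range b,
          (wS α t A i)ᴴ * rS α t (a+1+b-2-i-j) * wS α t A j with hC
      set Y := ∑ i ∈ range a, (wS α t A i)ᴴ * rS α t (a-1-i) * wS α t A b with hY
      set W := ∑ j ∈ range b, (wS α t A a)ᴴ * rS α t (b-1-j) * wS α t A j with hW
      calc X + (C + Y) = (X + Y) + C := by abel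
      _ = (Z + W) + C := by rw [← hkey]
      _ = Z + (C + W) := by abel

end MainIds


/-- block Hankel matrix H_n = [s_{j+k}]_{j,k=0}^{n}. -/
def hankelMat {p q : ℕ} (s : ℕ → Matrix (Fin p) (Fin q) ℂ) (n : ℕ) :
    Matrix (Fin (n + 1) × Fin p) (Fin (n + 1) × Fin q) ℂ :=
  Matrix.of fun jk lm => s (jk.1.val + lm.1.val) jk.2 lm.2

/-- block Hankel matrix K_n = [s_{j+k+1}]_{j,k=0}^{n}. -/
def hankelKMat {p q : ℕ} (s : ℕ → Matrix (Fin p) (Fin q) ℂ) (n : ℕ) :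
    Matrix (Fin (n + 1) × Fin p) (Fin (n + 1) × Fin q) ℂ :=
  Matrix.of fun jk lm => s (jk.1.val + lm.1.val + 1) jk.2 lm.2

section Assembly
open Finset
variable {q : ℕ}

lemma entry3 (B M C : Matrix (Fin q) (Fin q) ℂ) (x y : Fin q) :
    (Bᴴ * M * C) x y = ∑ p, ∑ p', star (B p x) * (M p p' * C p' y) := by
  rw [Matrix.mul_apply]
  have h : ∀ p' : Fin q, (Bᴴ * M) x p' * C p' y
      = ∑ p, star (B p x) * (M p p' * C p' y) := by
    intro p'
    rw [Matrix.mul_apply, Finset.sum_mul]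
    exact Finset.sum_congr rfl fun p _ => by rw [conjTranspose_apply, mul_assoc]
  rw [Finset.sum_congr rfl (fun p' _ => h p')]
  exact Finset.sum_comm

lemma congr_entry {N M : ℕ} (g : ℕ → Matrix (Fin q) (Fin q) ℂ)
    (C : Fin (N+1) → Fin (M+1) → Matrix (Fin q) (Fin q) ℂ) (a b : Fin (M+1)) (x y : Fin q) :
    ((Matrix.of fun (ip : Fin (N+1) × Fin q) (bq : Fin (M+1) × Fin q) => C ip.1 bq.1 ip.2 bq.2)ᴴ
      * hankelMat g N
      * (Matrix.of fun (ip : Fin (N+1) × Fin q) (bq : Fin (M+1) × Fin q) => C ip.1 bq.1 ip.2 bq.2))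
      (a,x) (b,y)
    = ∑ i : Fin (N+1), ∑ j : Fin (N+1), ((C i a)ᴴ * g (i.val+j.val) * C j b) x y := by
  set V := (Matrix.of fun (ip : Fin (N+1) × Fin q) (bq : Fin (M+1) × Fin q) =>
    C ip.1 bq.1 ip.2 bq.2) with hV
  have expand : (Vᴴ * hankelMat g N * V) (a,x) (b,y)
      = ∑ ip : Fin (N+1) × Fin q, ∑ jp : Fin (N+1) × Fin q,
          star (V ip (a,x)) * (g (ip.1.val + jp.1.val) ip.2 jp.2 * V jp (b,y)) := by
    rw [Matrix.mul_assoc, Matrix.mul_apply]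
    refine Finset.sum_congr rfl fun ip _ => ?_
    rw [conjTranspose_apply, Matrix.mul_apply, Finset.mul_sum]
    rfl
  rw [expand, Fintype.sum_prod_type]
  refine Finset.sum_congr rfl fun i _ => ?_
  have hR : ∑ j : Fin (N+1), ((C i a)ᴴ * g (i.val+j.val) * C j b) x y
      = ∑ j : Fin (N+1), ∑ p, ∑ p',
          star (C i a p x) * (g (i.val+j.val) p p' * C j b p' y) :=
    Finset.sum_congr rfl fun j _ => entry3 (C i a) (g (i.val+j.val)) (C j b) x y
  rw [hR]
  have hL : ∀ p : Fin q, ∑ jp : Fin (N+1) × Fin q,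
        star (V (i,p) (a,x)) * (g (i.val + jp.1.val) p jp.2 * V jp (b,y))
      = ∑ j : Fin (N+1), ∑ p' : Fin q,
        star (C i a p x) * (g (i.val + j.val) p p' * C j b p' y) := by
    intro p
    rw [Fintype.sum_prod_type]
    rfl
  rw [Finset.sum_congr rfl (fun p _ => hL p)]
  exact Finset.sum_comm

lemma rangecut {c N : ℕ} (h : c ≤ N) (f : ℕ → ℂ) (h0 : ∀ i, c ≤ i → f i = 0) :
    ∑ i ∈ range N, f i = ∑ i ∈ range c, f i :=
  (Finset.sum_subset (Finset.range_subset_range.mpr h)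
    (fun x _ hnx => h0 x (by simp only [Finset.mem_range, not_lt] at hnx; omega))).symm

lemma sum_reflect2 {β : Type*} [AddCommMonoid β] (G : ℕ → β) (c : ℕ) :
    ∑ i ∈ Finset.range c, G i = ∑ i ∈ Finset.range c, G (c-1-i) :=
  (Finset.sum_range_reflect G c).symm

lemma sum_reflect' {β : Type*} [AddCommMonoid β] (G : ℕ → β) (m : ℕ) :
    ∑ i ∈ range (m+1), G i = ∑ i ∈ range (m+1), G (m - i) := by
  rw [← Finset.sum_range_reflect]
  refine Finset.sum_congr rfl fun i hi => ?_
  simp only [Finset.mem_range] at hi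
  congr 1

lemma hermExtract {g : ℕ → Matrix (Fin q) (Fin q) ℂ} {N : ℕ}
    (h : (hankelMat g N).PosSemidef) : ∀ m, m ≤ 2*N → (g m)ᴴ = g m := by
  intro m hm
  have hH := h.1
  ext x y
  have hi : min m N < N + 1 := by omega
  have hj : m - min m N < N + 1 := by omega
  have := congrFun (congrFun hH (⟨min m N, hi⟩, x)) (⟨m - min m N, hj⟩, y)
  rw [conjTranspose_apply] at this
  have e1 : (hankelMat g N) (⟨m - min m N, hj⟩, y) (⟨min m N, hi⟩, x)
      = g m y x := by
    show g (m - min m N + min m N) y x = g m y x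
    congr 1
    omega
  have e2 : (hankelMat g N) (⟨min m N, hi⟩, x) (⟨m - min m N, hj⟩, y)
      = g m x y := by
    show g (min m N + (m - min m N)) x y = g m x y
    congr 1
    omega
  rw [e1, e2] at this
  rw [conjTranspose_apply]
  exact this

lemma hankel_rS (α : ℂ) (t : ℕ → Matrix (Fin q) (Fin q) ℂ) (n : ℕ) :
    hankelMat (rS α t) n = (-α) • hankelMat t n + hankelKMat t n := by
  ext ⟨i,x⟩ ⟨j,y⟩
  show rS α t (i.val + j.val) x y = _
  rw [rS]
  simp [hankelMat, hankelKMat, Matrix.add_apply, Matrix.smul_apply]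

lemma enat1 {κ : ℕ∞} {n : ℕ} (h : ((2*n+1 : ℕ) : ℕ∞) ≤ κ + 1) : ((2*n : ℕ) : ℕ∞) ≤ κ := by
  induction κ using ENat.recTopCoe with
  | top => exact le_top
  | coe k =>
      have : ((2*n+1 : ℕ) : ℕ∞) ≤ ((k+1 : ℕ) : ℕ∞) := by exact_mod_cast h
      have h2 : 2*n+1 ≤ k+1 := by exact_mod_cast this
      exact_mod_cast (by omega : 2*n ≤ k)

lemma enat2 {κ : ℕ∞} {m : ℕ} (h : ((2*(m+1) : ℕ) : ℕ∞) ≤ κ + 1) :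
    ((2*m+1 : ℕ) : ℕ∞) ≤ κ := by
  induction κ using ENat.recTopCoe with
  | top => exact le_top
  | coe k =>
      have : ((2*(m+1) : ℕ) : ℕ∞) ≤ ((k+1 : ℕ) : ℕ∞) := by exact_mod_cast h
      have h2 : 2*(m+1) ≤ k+1 := by exact_mod_cast this
      exact_mod_cast (by omega : 2*m+1 ≤ k)

lemma enat3 {κ : ℕ∞} {m : ℕ} (h : ((2*m+1 : ℕ) : ℕ∞) ≤ κ) : ((2*m : ℕ) : ℕ∞) ≤ κ := by
  induction κ using ENat.recTopCoe with
  | top => exact le_top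
  | coe k =>
      have h2 : 2*m+1 ≤ k := by exact_mod_cast h
      exact_mod_cast (by omega : 2*m ≤ k)

end Assembly


/-- the class K^{≥}_{q,κ,α} of α-Stieltjes right-nonnegative definite sequences. -/
def Kgg {q : ℕ} (α : ℝ) (κ : ℕ∞) (s : ℕ → Matrix (Fin q) (Fin q) ℂ) : Prop :=
  (∀ n : ℕ, ((2 * n : ℕ) : ℕ∞) ≤ κ → (hankelMat s n).PosSemidef) ∧
  (∀ n : ℕ, ((2 * n + 1 : ℕ) : ℕ∞) ≤ κ →
    ((-(α : ℂ)) • hankelMat s n + hankelKMat s n).PosSemidef)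

set_option maxHeartbeats 2000000 in
/-- Proposition 10.15: the inverse α-Schur transform of an α-Stieltjes
    right-nonnegative definite sequence with nonnegative Hermitian first matrix A
    is again α-Stieltjes right-nonnegative definite. -/
theorem stmt19 {q : ℕ} (α : ℝ) (κ : ℕ∞)
    (t : ℕ → Matrix (Fin q) (Fin q) ℂ) (A : Matrix (Fin q) (Fin q) ℂ)
    (ht : Kgg α κ t) (hA : A.PosSemidef) :
    Kgg α (κ + 1) (invT (α : ℂ) t A) := by
  classical
  have hα : (starRingEnd ℂ) (α:ℂ) = (α:ℂ) := Complex.conj_ofReal α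
  constructor
  · -- even conditions
    intro n hn
    cases n with
    | zero =>
        have hfact : hankelMat (invT (α:ℂ) t A) 0 = A.submatrix Prod.snd Prod.snd := by
          ext ⟨j,p⟩ ⟨l,r⟩
          show invT (α:ℂ) t A (j.val + l.val) p r = A p r
          have hj := j.isLt
          have hl := l.isLt
          rw [show j.val + l.val = 0 from by omega, invT_zero]
        rw [hfact]
        exact hA.submatrix _
    | succ m =>
        have h1 : ((2*m+1 : ℕ) : ℕ∞) ≤ κ := enat2 hn
        have h2 : ((2*m : ℕ) : ℕ∞) ≤ κ := enat3 h1
        have hHr : (hankelMat (rS (α:ℂ) t) m).PosSemidef := by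
          rw [hankel_rS]
          exact ht.2 m h1
        have hHt : (hankelMat t m).PosSemidef := ht.1 m h2
        have hherm0 : ∀ m', m' ≤ 2*m → (t m')ᴴ = t m' := hermExtract hHt
        have hhermr : ∀ m', m' ≤ 2*m → (rS (α:ℂ) t m')ᴴ = rS (α:ℂ) t m' := hermExtract hHr
        have hα' : star (α:ℂ) = (α:ℂ) := hα
        have hherm : ∀ m', m' ≤ 2*m+1 → (t m')ᴴ = t m' := by
          intro m' hm'
          rcases Nat.lt_or_ge m' (2*m+1) with h | h
          · exact hherm0 m' (by omega)
          · have hm'' : m' = 2*m+1 := by omega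
            subst hm''
            have he : t (2*m+1) = rS (α:ℂ) t (2*m) + (α:ℂ) • t (2*m) := by
              rw [rS, neg_smul]
              abel
            rw [he, conjTranspose_add, conjTranspose_smul, hα',
              hhermr (2*m) (le_refl _), hherm0 (2*m) (le_refl _)]
        have hA0 : (hankelMat (fun _ : ℕ => A) 0).PosSemidef := by
          have he : hankelMat (fun _ : ℕ => A) 0 = A.submatrix Prod.snd Prod.snd := by
            ext ⟨j,p⟩ ⟨l,r⟩
            rfl
          rw [he]
          exact hA.submatrix _
        set c2 : ℕ → ℕ → Matrix (Fin q) (Fin q) ℂ :=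
          fun i b => if i+1 ≤ b then wS (α:ℂ) t A (b-i-1) else 0 with hc2
        set Y1 := (Matrix.of fun (ip : Fin (0+1) × Fin q) (bq : Fin (m+1+1) × Fin q) =>
          (fun (_ : Fin (0+1)) (bb : Fin (m+1+1)) => wS (α:ℂ) t A bb.val) ip.1 bq.1 ip.2 bq.2)
          with hY1
        set Y2 := (Matrix.of fun (ip : Fin (m+1) × Fin q) (bq : Fin (m+1+1) × Fin q) =>
          (fun (i : Fin (m+1)) (bb : Fin (m+1+1)) => c2 i.val bb.val) ip.1 bq.1 ip.2 bq.2)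
          with hY2
        have hfact : hankelMat (invT (α:ℂ) t A) (m+1)
            = Y1ᴴ * hankelMat (fun _ : ℕ => A) 0 * Y1
              + Y2ᴴ * hankelMat (rS (α:ℂ) t) m * Y2 := by
          ext ⟨a,p⟩ ⟨b,r⟩
          show invT (α:ℂ) t A (a.val + b.val) p r = _
          rw [Matrix.add_apply, hY1,
            congr_entry (fun _ : ℕ => A)
              (fun (_ : Fin (0+1)) (bb : Fin (m+1+1)) => wS (α:ℂ) t A bb.val) a b p r,
            hY2,
            congr_entry (rS (α:ℂ) t)
              (fun (i : Fin (m+1)) (bb : Fin (m+1+1)) => c2 i.val bb.val) a b p r]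
          rw [Fin.sum_univ_one, Fin.sum_univ_one]
          -- second term: Fin sums → ranges
          have hRa : ∑ i : Fin (m+1), ∑ j : Fin (m+1),
                ((c2 i.val a.val)ᴴ * rS (α:ℂ) t (i.val+j.val) * c2 j.val b.val) p r
              = ∑ i ∈ Finset.range a.val, ∑ j ∈ Finset.range b.val,
                ((wS (α:ℂ) t A (a.val-1-i))ᴴ * rS (α:ℂ) t (i+j)
                  * wS (α:ℂ) t A (b.val-1-j)) p r := by
            rw [Fin.sum_univ_eq_sum_range (fun i => ∑ j : Fin (m+1),
              ((c2 i a.val)ᴴ * rS (α:ℂ) t (i+j.val) * c2 j.val b.val) p r) (m+1)]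
            rw [rangecut (by have := a.isLt; omega : a.val ≤ m+1) _ (fun i hi => ?_)]
            · refine Finset.sum_congr rfl fun i hi => ?_
              simp only [Finset.mem_range] at hi
              rw [Fin.sum_univ_eq_sum_range (fun j =>
                ((c2 i a.val)ᴴ * rS (α:ℂ) t (i+j) * c2 j b.val) p r) (m+1)]
              rw [rangecut (by have := b.isLt; omega : b.val ≤ m+1) _ (fun j hj => ?_)]
              · refine Finset.sum_congr rfl fun j hj => ?_
                simp only [Finset.mem_range] at hj
                rw [hc2]
                simp only [if_pos (by omega : i+1 ≤ a.val), if_pos (by omega : j+1 ≤ b.val)]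
                rw [show a.val-i-1 = a.val-1-i from by omega,
                  show b.val-j-1 = b.val-1-j from by omega]
              · rw [hc2]
                simp only [if_neg (by omega : ¬ (j+1 ≤ b.val))]
                simp
            · rw [hc2]
              simp only [if_neg (by omega : ¬ (i+1 ≤ a.val))]
              simp
          rw [hRa]
          rw [idE (α:ℂ) t hA hα a.val b.val
            (fun m' hm' => hherm m' (by have := a.isLt; omega))]
          rw [Matrix.add_apply, Matrix.sum_apply]
          rw [Finset.sum_congr rfl (fun i _ => Matrix.sum_apply p r _ _)]
          congr 1
          rw [sum_reflect2 (fun i => ∑ j ∈ Finset.range b.val,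
            ((wS (α:ℂ) t A i)ᴴ * rS (α:ℂ) t (a.val+b.val-2-i-j) * wS (α:ℂ) t A j) p r) a.val]
          refine Finset.sum_congr rfl fun i hi => ?_
          rw [sum_reflect2 (fun j => ((wS (α:ℂ) t A (a.val-1-i))ᴴ
            * rS (α:ℂ) t (a.val+b.val-2-(a.val-1-i)-j) * wS (α:ℂ) t A j) p r) b.val]
          refine Finset.sum_congr rfl fun j hj => ?_
          simp only [Finset.mem_range] at hi hj
          rw [show a.val+b.val-2-(a.val-1-i)-(b.val-1-j) = i+j from by omega]
        rw [hfact]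
        exact (hA0.conjTranspose_mul_mul_same Y1).add (hHr.conjTranspose_mul_mul_same Y2)
  · -- odd conditions
    intro n hn
    have hκ : ((2*n : ℕ) : ℕ∞) ≤ κ := enat1 hn
    have hHt : (hankelMat t n).PosSemidef := ht.1 n hκ
    have hherm : ∀ m', m' ≤ 2*n → (t m')ᴴ = t m' := hermExtract hHt
    set c0 : ℕ → ℕ → Matrix (Fin q) (Fin q) ℂ :=
      fun i b => if i ≤ b then vS (α:ℂ) t A (b-i) else 0 with hc0
    set V := (Matrix.of fun (ip : Fin (n+1) × Fin q) (bq : Fin (n+1) × Fin q) =>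
      c0 ip.1.val bq.1.val ip.2 bq.2) with hVdef
    have hfact : (-(α:ℂ)) • hankelMat (invT (α:ℂ) t A) n + hankelKMat (invT (α:ℂ) t A) n
        = Vᴴ * hankelMat t n * V := by
      ext ⟨a,p⟩ ⟨b,r⟩
      have hlhs : ((-(α:ℂ)) • hankelMat (invT (α:ℂ) t A) n
            + hankelKMat (invT (α:ℂ) t A) n) (a,p) (b,r)
          = shiftA (α:ℂ) (invT (α:ℂ) t A) (a.val+b.val+1) p r := by
        show ((-(α:ℂ)) • hankelMat (invT (α:ℂ) t A) n) (a,p) (b,r)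
            + hankelKMat (invT (α:ℂ) t A) n (a,p) (b,r)
          = ((-(α:ℂ)) • invT (α:ℂ) t A (a.val+b.val)
              + invT (α:ℂ) t A (a.val+b.val+1)) p r
        rw [Matrix.add_apply, Matrix.smul_apply, Matrix.smul_apply]
        rfl
      rw [hlhs, idO (α:ℂ) t hA a.val b.val
        (fun m' hm' => hherm m' (by have ha := a.isLt; have hb := b.isLt; omega))]
      have hV' : V = Matrix.of fun (ip : Fin (n+1) × Fin q) (bq : Fin (n+1) × Fin q) =>
          (fun (i : Fin (n+1)) (bb : Fin (n+1)) => c0 i.val bb.val) ip.1 bq.1 ip.2 bq.2 := rfl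
      rw [hV', congr_entry t (fun (i : Fin (n+1)) (bb : Fin (n+1)) => c0 i.val bb.val) a b p r]
      -- RHS: Fin sums → range sums, cut, if_pos
      have hRa : ∑ i : Fin (n+1), ∑ j : Fin (n+1),
            ((c0 i.val a.val)ᴴ * t (i.val+j.val) * c0 j.val b.val) p r
          = ∑ i ∈ Finset.range (a.val+1), ∑ j ∈ Finset.range (b.val+1),
            ((vS (α:ℂ) t A (a.val-i))ᴴ * t (i+j) * vS (α:ℂ) t A (b.val-j)) p r := by
        rw [Fin.sum_univ_eq_sum_range (fun i => ∑ j : Fin (n+1),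
          ((c0 i a.val)ᴴ * t (i+j.val) * c0 j.val b.val) p r) (n+1)]
        rw [rangecut (by omega : a.val+1 ≤ n+1) _ (fun i hi => ?_)]
        · refine Finset.sum_congr rfl fun i hi => ?_
          simp only [Finset.mem_range] at hi
          rw [Fin.sum_univ_eq_sum_range (fun j =>
            ((c0 i a.val)ᴴ * t (i+j) * c0 j b.val) p r) (n+1)]
          rw [rangecut (by omega : b.val+1 ≤ n+1) _ (fun j hj => ?_)]
          · refine Finset.sum_congr rfl fun j hj => ?_
            simp only [Finset.mem_range] at hj
            rw [hc0]
            simp only [if_pos (by omega : i ≤ a.val), if_pos (by omega : j ≤ b.val)]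
          · rw [hc0]
            simp only [if_neg (by omega : ¬ (j ≤ b.val))]
            simp
        · rw [hc0]
          simp only [if_neg (by omega : ¬ (i ≤ a.val))]
          simp
      rw [hRa]
      -- LHS: entries into sums, then reflect
      rw [Matrix.sum_apply]
      rw [Finset.sum_congr rfl (fun i _ => Matrix.sum_apply p r _ _)]
      rw [sum_reflect' (fun i => ∑ j ∈ Finset.range (b.val+1),
        ((vS (α:ℂ) t A i)ᴴ * t (a.val+b.val-i-j) * vS (α:ℂ) t A j) p r) a.val]
      refine Finset.sum_congr rfl fun i hi => ?_
      rw [sum_reflect' (fun j =>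
        ((vS (α:ℂ) t A (a.val-i))ᴴ * t (a.val+b.val-(a.val-i)-j) * vS (α:ℂ) t A j) p r) b.val]
      refine Finset.sum_congr rfl fun j hj => ?_
      simp only [Finset.mem_range] at hi hj
      rw [show a.val+b.val-(a.val-i)-(b.val-j) = i+j from by omega]
    rw [hfact]
    exact hHt.conjTranspose_mul_mul_same V
end
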